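/- Let n, m ≥ 2, r = n/m, and suppose the Behrens-Fisher cubic f has three distinct real roots μ₁ < μ₂ < μ₃. Then at most two of the corresponding critical points (μᵢ, (x̄−μᵢ)² + sX², (ȳ−μᵢ)² + sY²) can be local maxima of the log-likelihood ℓ; in particular, the middle root μ₂ corresponds to a critical point that is not a local maximum of the profile function μ ↦ ℓ(μ, (x̄−μ)²+sX², (ȳ−μ)²+sY²). -/

import Mathlib

theorem factP (nR mR xbar ybar sX2 sY2 r μ₁ μ₂ μ₃ : ℝ)
    (hrm : r * mR = nR)
    (h12 : μ₁ < μ₂) (h23 : μ₂ < μ₃)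
    (hroot : ∀ μ ∈ ({μ₁, μ₂, μ₃} : Set ℝ),
      (1 + r)*μ^3 - ((2*xbar + ybar) + r*(2*ybar + xbar))*μ^2
      + (xbar^2 + 2*(1+r)*xbar*ybar + r*ybar^2 + sX2 + r*sY2)*μ
      - (xbar^2*ybar + r*ybar^2*xbar + sX2*ybar + r*sY2*xbar) = 0) :
    ∀ μ, nR*(xbar-μ)*((ybar-μ)^2+sY2) + mR*(ybar-μ)*((xbar-μ)^2+sX2)
      = -(nR+mR)*(μ-μ₁)*(μ-μ₂)*(μ-μ₃) := by
  have hP : ∀ μ ∈ ({μ₁, μ₂, μ₃} : Set ℝ),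
      nR*(xbar-μ)*((ybar-μ)^2+sY2) + mR*(ybar-μ)*((xbar-μ)^2+sX2) = 0 := by
    intro μ hμ
    have h := hroot μ hμ
    rw [← hrm]
    linear_combination (-mR) * h
  set a := nR*(xbar+2*ybar) + mR*(ybar+2*xbar) - (nR+mR)*(μ₁+μ₂+μ₃) with ha
  set b := -nR*(2*xbar*ybar+ybar^2+sY2) - mR*(2*xbar*ybar+xbar^2+sX2)
      + (nR+mR)*(μ₁*μ₂+μ₁*μ₃+μ₂*μ₃) with hb
  set c := nR*xbar*ybar^2 + nR*sY2*xbar + mR*xbar^2*ybar + mR*sX2*ybar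
      - (nR+mR)*(μ₁*μ₂*μ₃) with hc
  have hE : ∀ μ, nR*(xbar-μ)*((ybar-μ)^2+sY2) + mR*(ybar-μ)*((xbar-μ)^2+sX2)
      + (nR+mR)*(μ-μ₁)*(μ-μ₂)*(μ-μ₃) = a*μ^2 + b*μ + c := by
    intro μ; rw [ha, hb, hc]; ring
  have h1 : a*μ₁^2 + b*μ₁ + c = 0 := by
    linear_combination hP μ₁ (by simp) - hE μ₁
  have h2 : a*μ₂^2 + b*μ₂ + c = 0 := by
    linear_combination hP μ₂ (by simp) - hE μ₂
  have h3 : a*μ₃^2 + b*μ₃ + c = 0 := by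
    linear_combination hP μ₃ (by simp) - hE μ₃
  have d12 : μ₁ - μ₂ ≠ 0 := by linarith
  have d23 : μ₂ - μ₃ ≠ 0 := by linarith
  have d13 : μ₁ - μ₃ ≠ 0 := by linarith
  have e12 : a*(μ₁+μ₂) + b = 0 := by
    have h : (μ₁-μ₂) * (a*(μ₁+μ₂)+b) = 0 := by linear_combination h1 - h2
    exact (mul_eq_zero.1 h).resolve_left d12
  have e23 : a*(μ₂+μ₃) + b = 0 := by
    have h : (μ₂-μ₃) * (a*(μ₂+μ₃)+b) = 0 := by linear_combination h2 - h3
    exact (mul_eq_zero.1 h).resolve_left d23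
  have hA : a = 0 := by
    have h : (μ₁-μ₃) * a = 0 := by linear_combination e12 - e23
    exact (mul_eq_zero.1 h).resolve_left d13
  have hB : b = 0 := by rw [hA] at e12; linarith
  have hC : c = 0 := by rw [hA, hB] at h1; linarith
  intro μ
  have h := hE μ
  rw [hA, hB, hC] at h
  linarith

noncomputable def ell (n m : ℕ) (xbar ybar sX2 sY2 : ℝ) (μ σX2 σY2 : ℝ) : ℝ :=
  -((n + m : ℝ)/2) * Real.log (2*Real.pi)
  - ((n : ℝ)/2) * Real.log σX2 - ((m : ℝ)/2) * Real.log σY2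
  - ((n : ℝ)/2) * ((sX2 + (xbar - μ)^2) / σX2)
  - ((m : ℝ)/2) * ((sY2 + (ybar - μ)^2) / σY2)

theorem middle_root_not_local_max
    (n m : ℕ) (hn : 2 ≤ n) (hm : 2 ≤ m)
    (xbar ybar sX2 sY2 : ℝ) (hsX : 0 < sX2) (hsY : 0 < sY2)
    (r : ℝ) (hr : r = (n : ℝ) / m)
    (μ₁ μ₂ μ₃ : ℝ) (h12 : μ₁ < μ₂) (h23 : μ₂ < μ₃)
    (hroot : ∀ μ ∈ ({μ₁, μ₂, μ₃} : Set ℝ),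
      (1 + r)*μ^3 - ((2*xbar + ybar) + r*(2*ybar + xbar))*μ^2
      + (xbar^2 + 2*(1+r)*xbar*ybar + r*ybar^2 + sX2 + r*sY2)*μ
      - (xbar^2*ybar + r*ybar^2*xbar + sX2*ybar + r*sY2*xbar) = 0) :
    ¬ (IsLocalMax (fun p : ℝ × ℝ × ℝ => ell n m xbar ybar sX2 sY2 p.1 p.2.1 p.2.2)
          (μ₁, (xbar - μ₁)^2 + sX2, (ybar - μ₁)^2 + sY2) ∧
       IsLocalMax (fun p : ℝ × ℝ × ℝ => ell n m xbar ybar sX2 sY2 p.1 p.2.1 p.2.2)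
          (μ₂, (xbar - μ₂)^2 + sX2, (ybar - μ₂)^2 + sY2) ∧
       IsLocalMax (fun p : ℝ × ℝ × ℝ => ell n m xbar ybar sX2 sY2 p.1 p.2.1 p.2.2)
          (μ₃, (xbar - μ₃)^2 + sX2, (ybar - μ₃)^2 + sY2)) ∧
    ¬ IsLocalMax
        (fun μ => ell n m xbar ybar sX2 sY2 μ ((xbar - μ)^2 + sX2) ((ybar - μ)^2 + sY2))
        μ₂ := by
  have hmpos : (0:ℝ) < m := by positivity
  have hnpos : (0:ℝ) < n := by positivity
  have hrm : r * (m:ℝ) = (n:ℝ) := by rw [hr]; field_simp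
  have hfact := factP (n:ℝ) (m:ℝ) xbar ybar sX2 sY2 r μ₁ μ₂ μ₃ hrm h12 h23 hroot
  set g : ℝ → ℝ := fun μ =>
    ell n m xbar ybar sX2 sY2 μ ((xbar - μ)^2 + sX2) ((ybar - μ)^2 + sY2) with hgdef
  have hu : ∀ μ : ℝ, (0:ℝ) < (xbar - μ)^2 + sX2 := fun μ => by positivity
  have hv : ∀ μ : ℝ, (0:ℝ) < (ybar - μ)^2 + sY2 := fun μ => by positivity
  -- simplified form of g
  have hgeq : g = fun μ =>
      (-((n + m : ℝ)/2) * Real.log (2*Real.pi) - (n:ℝ)/2 - (m:ℝ)/2)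
      - (n:ℝ)/2 * Real.log ((xbar - μ)^2 + sX2)
      - (m:ℝ)/2 * Real.log ((ybar - μ)^2 + sY2) := by
    funext μ
    simp only [hgdef, ell]
    have h1 : (sX2 + (xbar - μ)^2) / ((xbar - μ)^2 + sX2) = 1 := by
      rw [add_comm sX2]; exact div_self (hu μ).ne'
    have h2 : (sY2 + (ybar - μ)^2) / ((ybar - μ)^2 + sY2) = 1 := by
      rw [add_comm sY2]; exact div_self (hv μ).ne'
    rw [h1, h2]; ring
  -- derivative of g
  have hder : ∀ x : ℝ, HasDerivAt g
      ((n:ℝ)*(xbar - x)/((xbar - x)^2 + sX2) + (m:ℝ)*(ybar - x)/((ybar - x)^2 + sY2)) x := by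
    intro x
    rw [hgeq]
    have hdu : HasDerivAt (fun μ : ℝ => (xbar - μ)^2 + sX2) (2*(xbar - x)*(-1)) x := by
      have h0 : HasDerivAt (fun μ : ℝ => xbar - μ) (-1) x := by
        simpa using (hasDerivAt_id x).const_sub xbar
      simpa using (h0.pow 2).add_const sX2
    have hdv : HasDerivAt (fun μ : ℝ => (ybar - μ)^2 + sY2) (2*(ybar - x)*(-1)) x := by
      have h0 : HasDerivAt (fun μ : ℝ => ybar - μ) (-1) x := by
        simpa using (hasDerivAt_id x).const_sub ybar
      simpa using (h0.pow 2).add_const sY2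
    have hlu := (hdu.log (hu x).ne')
    have hlv := (hdv.log (hv x).ne')
    have := ((hlu.const_mul ((n:ℝ)/2)).const_sub
        (-((n + m : ℝ)/2) * Real.log (2*Real.pi) - (n:ℝ)/2 - (m:ℝ)/2)).sub
        (hlv.const_mul ((m:ℝ)/2))
    refine this.congr_deriv ?_
    ring
  -- middle root is not a local max of the profile
  have hmid : ¬ IsLocalMax g μ₂ := by
    intro hmax
    have hmono : StrictMonoOn g (Set.Icc μ₂ μ₃) := by
      apply strictMonoOn_of_deriv_pos (convex_Icc _ _)
      · intro x _
        exact (hder x).differentiableAt.continuousAt.continuousWithinAt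
      · intro x hx
        rw [interior_Icc] at hx
        rw [(hder x).deriv]
        have hnum : (0:ℝ) < (n:ℝ)*(xbar - x)*((ybar - x)^2+sY2)
            + (m:ℝ)*(ybar - x)*((xbar - x)^2+sX2) := by
          rw [hfact x]
          have hx1 : 0 < x - μ₁ := by linarith [hx.1]
          have hx2 : 0 < x - μ₂ := by linarith [hx.1]
          have hx3 : x - μ₃ < 0 := by linarith [hx.2]
          nlinarith [mul_pos (mul_pos (mul_pos (show (0:ℝ) < (n:ℝ)+(m:ℝ) by positivity) hx1) hx2) (show (0:ℝ) < μ₃ - x by linarith)]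
        rw [div_add_div _ _ (hu x).ne' (hv x).ne']
        apply div_pos
        · nlinarith [hnum]
        · exact mul_pos (hu x) (hv x)
    have h' : ∀ᶠ x in nhdsWithin μ₂ (Set.Ioi μ₂), g x ≤ g μ₂ :=
      hmax.filter_mono nhdsWithin_le_nhds
    have hIoo : Set.Ioo μ₂ μ₃ ∈ nhdsWithin μ₂ (Set.Ioi μ₂) :=
      Ioo_mem_nhdsGT_of_mem ⟨le_refl μ₂, h23⟩
    obtain ⟨x, hle, hxm⟩ := (h'.and (Filter.eventually_iff_exists_mem.mpr
      ⟨Set.Ioo μ₂ μ₃, hIoo, fun y hy => hy⟩)).exists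
    have : g μ₂ < g x :=
      hmono ⟨le_refl μ₂, le_of_lt h23⟩ ⟨le_of_lt hxm.1, le_of_lt hxm.2⟩ hxm.1
    linarith
  constructor
  · rintro ⟨-, h2, -⟩
    apply hmid
    have hφ : ContinuousAt (fun μ : ℝ =>
        ((μ, (xbar - μ)^2 + sX2, (ybar - μ)^2 + sY2) : ℝ × ℝ × ℝ)) μ₂ := by
      fun_prop
    exact hφ.tendsto.eventually h2
  · exact hmid
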